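/- For integers s_{ij} ≥ 2 (1 ≤ i < j ≤ 4), the real quadratic form q(a₁,...,a₄) = -(a₁² + a₂² + a₃² + a₄²) + 2Σ_{i<j}s_{ij}a_ia_j has signature (1,3) if and only if (s₁₂s₁₄+s₂₄)² - (s₁₂²-1)(s₁₄²-1) > ((s₁₂²-1)(s₁₃s₁₄+s₃₄) - (s₁₂s₁₃+s₂₃)(s₁₂s₁₄+s₂₄))² / ((s₁₂s₁₃+s₂₃)² - (s₁₂²-1)(s₁₃²-1)). -/

import Mathlib

/-- A real quadratic map `q` on `Fin 4 → ℝ` has signature (1,3) if after an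
invertible linear change of variables it becomes a diagonal form with one
positive and three negative coefficients. -/
def HasSignatureOneThree (q : (Fin 4 → ℝ) → ℝ) : Prop :=
  ∃ (T : (Fin 4 → ℝ) ≃ₗ[ℝ] (Fin 4 → ℝ)) (w : Fin 4 → ℝ),
    0 < w 0 ∧ (∀ i : Fin 4, i ≠ 0 → w i < 0) ∧
    ∀ a : Fin 4 → ℝ, q a = ∑ i : Fin 4, w i * (T a i) ^ 2

noncomputable def changeVar (p q r e b c m : ℝ) (he : e ≠ 0) :
    (Fin 4 → ℝ) ≃ₗ[ℝ] (Fin 4 → ℝ) where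
  toFun a := ![e * a 1 + b * a 2 + c * a 3,
               a 0 - p * a 1 - q * a 2 - r * a 3,
               a 2 + m * a 3,
               a 3]
  invFun v := ![v 1 + p * ((v 0 - b * (v 2 - m * v 3) - c * v 3) / e)
                  + q * (v 2 - m * v 3) + r * v 3,
                (v 0 - b * (v 2 - m * v 3) - c * v 3) / e,
                v 2 - m * v 3,
                v 3]
  map_add' x y := by
    funext i; fin_cases i <;> simp <;> ring
  map_smul' t x := by
    funext i; fin_cases i <;> simp <;> ring
  left_inv a := by
    funext i; fin_cases i <;> simp <;> field_simp <;> ring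
  right_inv v := by
    funext i; fin_cases i <;> simp <;> field_simp <;> ring

lemma changeVar_apply (p q r e b c m : ℝ) (he : e ≠ 0) (a : Fin 4 → ℝ) :
    changeVar p q r e b c m he a = ![e * a 1 + b * a 2 + c * a 3,
               a 0 - p * a 1 - q * a 2 - r * a 3,
               a 2 + m * a 3, a 3] := rfl

lemma key_identity (P Q R U V W a0 a1 a2 a3 : ℝ)
    (he : P^2 - 1 ≠ 0)
    (hA : (P^2-1)*(Q^2-1) - (P*Q+U)^2 ≠ 0) :
    -(a0^2+a1^2+a2^2+a3^2) + 2*(P*a0*a1 + Q*a0*a2 + R*a0*a3 + U*a1*a2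
      + V*a1*a3 + W*a2*a3)
    = (1/(P^2-1)) * ((P^2-1)*a1 + (P*Q+U)*a2 + (P*R+V)*a3)^2
      + (-1) * (a0 - P*a1 - Q*a2 - R*a3)^2
      + (((P^2-1)*(Q^2-1) - (P*Q+U)^2)/(P^2-1))
        * (a2 + (((P^2-1)*(Q*R+W) - (P*Q+U)*(P*R+V))
            /((P^2-1)*(Q^2-1) - (P*Q+U)^2))*a3)^2
      + ((((P^2-1)*(Q^2-1)-(P*Q+U)^2)*((P^2-1)*(R^2-1)-(P*R+V)^2)
            - ((P^2-1)*(Q*R+W)-(P*Q+U)*(P*R+V))^2)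
          /((((P^2-1)*(Q^2-1)-(P*Q+U)^2))*(P^2-1))) * a3^2 := by
  field_simp
  ring

set_option maxHeartbeats 1600000 in
theorem aux14 (P Q R U V W : ℝ)
    (hp : 2 ≤ P) (hq : 2 ≤ Q) (hr : 2 ≤ R)
    (hu : 2 ≤ U) (hv : 2 ≤ V) (hw : 2 ≤ W) :
    HasSignatureOneThree (fun a : Fin 4 → ℝ =>
      -(a 0 ^ 2 + a 1 ^ 2 + a 2 ^ 2 + a 3 ^ 2)
        + 2 * (P * a 0 * a 1 + Q * a 0 * a 2
          + R * a 0 * a 3 + U * a 1 * a 2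
          + V * a 1 * a 3 + W * a 2 * a 3)) ↔
    (P * R + V) ^ 2 - (P ^ 2 - 1) * (R ^ 2 - 1) >
      ((P ^ 2 - 1) * (Q * R + W) - (P * Q + U) * (P * R + V)) ^ 2 /
        ((P * Q + U) ^ 2 - (P ^ 2 - 1) * (Q ^ 2 - 1)) := by
  obtain ⟨e, he⟩ : ∃ e : ℝ, e = P^2 - 1 := ⟨_, rfl⟩
  obtain ⟨b, hb⟩ : ∃ b : ℝ, b = P*Q + U := ⟨_, rfl⟩
  obtain ⟨c, hc⟩ : ∃ c : ℝ, c = P*R + V := ⟨_, rfl⟩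
  obtain ⟨g, hg⟩ : ∃ g : ℝ, g = Q*R + W := ⟨_, rfl⟩
  obtain ⟨A, hA⟩ : ∃ A : ℝ, A = e*(Q^2-1) - b^2 := ⟨_, rfl⟩
  obtain ⟨D, hD⟩ : ∃ D : ℝ, D = e*(R^2-1) - c^2 := ⟨_, rfl⟩
  obtain ⟨Bq, hBq⟩ : ∃ Bq : ℝ, Bq = e*g - b*c := ⟨_, rfl⟩
  rw [show (P * R + V) ^ 2 - (P ^ 2 - 1) * (R ^ 2 - 1) = c^2 - e*(R^2-1) by
        rw [hc, he],
      show ((P ^ 2 - 1) * (Q * R + W) - (P * Q + U) * (P * R + V)) ^ 2 /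
          ((P * Q + U) ^ 2 - (P ^ 2 - 1) * (Q ^ 2 - 1))
        = Bq^2 / (b^2 - e*(Q^2-1)) by rw [hBq, hb, hc, he, hg]]
  have hepos : 0 < e := by rw [he]; nlinarith
  have hene : e ≠ 0 := ne_of_gt hepos
  have hAneg : A < 0 := by
    rw [hA, hb, he]
    nlinarith [hp, hq, hu, sq_nonneg U,
      mul_nonneg (mul_nonneg (by linarith : (0:ℝ) ≤ P) (by linarith : (0:ℝ) ≤ Q))
        (by linarith : (0:ℝ) ≤ U)]
  have hAne : A ≠ 0 := ne_of_lt hAneg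
  have hAEneg : A * e < 0 := mul_neg_of_neg_of_pos hAneg hepos
  have hnA : 0 < b^2 - e*(Q^2-1) := by
    have : b^2 - e*(Q^2-1) = -A := by rw [hA]; ring
    rw [this]; linarith
  have hADprod : (c^2 - e*(R^2-1)) * (b^2 - e*(Q^2-1)) = A*D := by
    rw [hA, hD]; ring
  have hiff : (c^2 - e*(R^2-1) > Bq^2 / (b^2 - e*(Q^2-1))) ↔ 0 < A*D - Bq^2 := by
    rw [gt_iff_lt, div_lt_iff₀ hnA, hADprod, ← sub_pos]
  rw [hiff]
  have hene' : P^2 - 1 ≠ 0 := by rw [← he]; exact hene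
  have hAne' : (P^2-1)*(Q^2-1) - (P*Q+U)^2 ≠ 0 := by
    rw [← he, ← hb, ← hA]; exact hAne
  obtain ⟨T, hT0, hT1, hT2, hT3⟩ :
      ∃ T : (Fin 4 → ℝ) ≃ₗ[ℝ] (Fin 4 → ℝ),
        (∀ a : Fin 4 → ℝ, T a 0 = e*a 1 + b*a 2 + c*a 3) ∧
        (∀ a : Fin 4 → ℝ, T a 1 = a 0 - P*a 1 - Q*a 2 - R*a 3) ∧
        (∀ a : Fin 4 → ℝ, T a 2 = a 2 + (Bq/A)*a 3) ∧
        (∀ a : Fin 4 → ℝ, T a 3 = a 3) := by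
    refine ⟨changeVar P Q R e b c (Bq/A) hene, ?_, ?_, ?_, ?_⟩ <;>
      intro a <;> rw [changeVar_apply] <;> simp
  have key : ∀ a : Fin 4 → ℝ,
      -(a 0^2 + a 1^2 + a 2^2 + a 3^2)
        + 2*(P*a 0*a 1 + Q*a 0*a 2 + R*a 0*a 3 + U*a 1*a 2 + V*a 1*a 3 + W*a 2*a 3)
      = (1/e)*(T a 0)^2 + (-1)*(T a 1)^2 + (A/e)*(T a 2)^2
        + ((A*D - Bq^2)/(A*e))*(T a 3)^2 := by
    intro a
    rw [hT0, hT1, hT2, hT3, hBq, hA, hD, hg, hb, hc, he]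
    exact key_identity P Q R U V W (a 0) (a 1) (a 2) (a 3) hene' hAne'
  unfold HasSignatureOneThree
  constructor
  · rintro ⟨T', w', hw'0, hw'neg, hq'⟩
    by_contra hc0
    push_neg at hc0
    have hk : 0 ≤ (A*D - Bq^2)/(A*e) := by
      rw [div_nonneg_iff]
      exact Or.inr ⟨by linarith, hAEneg.le⟩
    obtain ⟨f1, hf1⟩ : ∃ f1 : (Fin 4 → ℝ) →ₗ[ℝ] ℝ × ℝ,
        ∀ x : Fin 4 → ℝ, f1 x = (T x 1, T x 2) :=
      ⟨((LinearMap.proj 1).comp T.toLinearMap).prod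
        ((LinearMap.proj 2).comp T.toLinearMap), fun x => rfl⟩
    obtain ⟨f2, hf2⟩ : ∃ f2 : (Fin 4 → ℝ) →ₗ[ℝ] ℝ,
        ∀ x : Fin 4 → ℝ, f2 x = T' x 0 :=
      ⟨(LinearMap.proj 0).comp T'.toLinearMap, fun x => rfl⟩
    have hfr : Module.finrank ℝ (Fin 4 → ℝ) = 4 := by
      simp [Module.finrank_fin_fun]
    have hd1 : 2 ≤ Module.finrank ℝ (LinearMap.ker f1) := by
      have hrn := LinearMap.finrank_range_add_finrank_ker f1
      have hr2 : Module.finrank ℝ (LinearMap.range f1) ≤ 2 := by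
        have := Submodule.finrank_le (LinearMap.range f1)
        simpa using this
      omega
    have hd2 : 3 ≤ Module.finrank ℝ (LinearMap.ker f2) := by
      have hrn := LinearMap.finrank_range_add_finrank_ker f2
      have hr2 : Module.finrank ℝ (LinearMap.range f2) ≤ 1 := by
        have := Submodule.finrank_le (LinearMap.range f2)
        simpa using this
      omega
    have hsum := Submodule.finrank_sup_add_finrank_inf_eq
      (LinearMap.ker f1) (LinearMap.ker f2)
    have hsup : Module.finrank ℝ ↥(LinearMap.ker f1 ⊔ LinearMap.ker f2) ≤ 4 := by
      have := Submodule.finrank_le (LinearMap.ker f1 ⊔ LinearMap.ker f2)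
      omega
    have hinf : 0 < Module.finrank ℝ ↥(LinearMap.ker f1 ⊓ LinearMap.ker f2) := by
      omega
    have hnebot : LinearMap.ker f1 ⊓ LinearMap.ker f2 ≠ ⊥ := by
      intro hbot
      rw [hbot, finrank_bot] at hinf
      exact lt_irrefl 0 hinf
    obtain ⟨v, hvmem, hv0⟩ := Submodule.exists_mem_ne_zero_of_ne_bot hnebot
    obtain ⟨hvm1, hvm2⟩ := Submodule.mem_inf.mp hvmem
    have hf1v : f1 v = 0 := LinearMap.mem_ker.mp hvm1
    have hf2v : f2 v = 0 := LinearMap.mem_ker.mp hvm2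
    rw [hf1] at hf1v
    rw [hf2] at hf2v
    rw [Prod.ext_iff] at hf1v
    obtain ⟨hTv1, hTv2⟩ := hf1v
    simp only [Prod.fst_zero] at hTv1
    simp only [Prod.snd_zero] at hTv2
    have hq'' : ∀ a : Fin 4 → ℝ,
        -(a 0^2 + a 1^2 + a 2^2 + a 3^2)
          + 2*(P*a 0*a 1 + Q*a 0*a 2 + R*a 0*a 3 + U*a 1*a 2 + V*a 1*a 3 + W*a 2*a 3)
        = ∑ i : Fin 4, w' i * (T' a i)^2 := hq'
    have hqv_ge : 0 ≤ ∑ i : Fin 4, w' i * (T' v i)^2 := by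
      rw [← hq'' v, key v, hTv1, hTv2]
      have h1 : 0 ≤ (1/e)*(T v 0)^2 :=
        mul_nonneg (one_div_pos.mpr hepos).le (sq_nonneg _)
      have h2 : 0 ≤ ((A*D - Bq^2)/(A*e))*(T v 3)^2 :=
        mul_nonneg hk (sq_nonneg _)
      nlinarith
    rw [Fin.sum_univ_four, hf2v] at hqv_ge
    have t1 : w' 1 * (T' v 1)^2 ≤ 0 :=
      mul_nonpos_of_nonpos_of_nonneg (hw'neg 1 (by decide)).le (sq_nonneg _)
    have t2 : w' 2 * (T' v 2)^2 ≤ 0 :=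
      mul_nonpos_of_nonpos_of_nonneg (hw'neg 2 (by decide)).le (sq_nonneg _)
    have t3 : w' 3 * (T' v 3)^2 ≤ 0 :=
      mul_nonpos_of_nonpos_of_nonneg (hw'neg 3 (by decide)).le (sq_nonneg _)
    have hzero : ∀ x : ℝ, ∀ i : Fin 4, i ≠ 0 → w' i * x^2 = 0 → x = 0 := by
      intro x i hi hzx
      have hne := (hw'neg i hi).ne
      rcases mul_eq_zero.mp hzx with h | h
      · exact absurd h hne
      · exact pow_eq_zero_iff (by norm_num) |>.mp h
    have z1 : T' v 1 = 0 := hzero _ 1 (by decide) (by nlinarith)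
    have z2 : T' v 2 = 0 := hzero _ 2 (by decide) (by nlinarith)
    have z3 : T' v 3 = 0 := hzero _ 3 (by decide) (by nlinarith)
    have hT'v : T' v = 0 := by
      funext i
      fin_cases i
      · exact hf2v
      · exact z1
      · exact z2
      · exact z3
    exact hv0 ((LinearEquiv.map_eq_zero_iff T').mp hT'v)
  · intro hpos
    refine ⟨T, ![1/e, -1, A/e, (A*D - Bq^2)/(A*e)], ?_, ?_, ?_⟩
    · simpa using one_div_pos.mpr hepos
    · intro i hi
      fin_cases i
      · exact absurd rfl hi
      · norm_num
      · simpa using div_neg_of_neg_of_pos hAneg hepos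
      · simpa using div_neg_of_pos_of_neg hpos hAEneg
    · intro a
      rw [Fin.sum_univ_four]
      simp only [Matrix.cons_val_zero, Matrix.cons_val_one, Matrix.head_cons,
        Matrix.cons_val_two, Matrix.tail_cons, Matrix.cons_val_three]
      exact key a

theorem stmt14 (s₁₂ s₁₃ s₁₄ s₂₃ s₂₄ s₃₄ : ℤ)
    (h12 : 2 ≤ s₁₂) (h13 : 2 ≤ s₁₃) (h14 : 2 ≤ s₁₄)
    (h23 : 2 ≤ s₂₃) (h24 : 2 ≤ s₂₄) (h34 : 2 ≤ s₃₄) :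
    HasSignatureOneThree (fun a : Fin 4 → ℝ =>
      -(a 0 ^ 2 + a 1 ^ 2 + a 2 ^ 2 + a 3 ^ 2)
        + 2 * ((s₁₂ : ℝ) * a 0 * a 1 + (s₁₃ : ℝ) * a 0 * a 2
          + (s₁₄ : ℝ) * a 0 * a 3 + (s₂₃ : ℝ) * a 1 * a 2
          + (s₂₄ : ℝ) * a 1 * a 3 + (s₃₄ : ℝ) * a 2 * a 3)) ↔
    ((s₁₂ : ℝ) * s₁₄ + s₂₄) ^ 2 - ((s₁₂ : ℝ) ^ 2 - 1) * ((s₁₄ : ℝ) ^ 2 - 1) >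
      (((s₁₂ : ℝ) ^ 2 - 1) * ((s₁₃ : ℝ) * s₁₄ + s₃₄)
          - ((s₁₂ : ℝ) * s₁₃ + s₂₃) * ((s₁₂ : ℝ) * s₁₄ + s₂₄)) ^ 2 /
        (((s₁₂ : ℝ) * s₁₃ + s₂₃) ^ 2 - ((s₁₂ : ℝ) ^ 2 - 1) * ((s₁₃ : ℝ) ^ 2 - 1)) := by
  exact aux14 _ _ _ _ _ _ (by exact_mod_cast h12) (by exact_mod_cast h13)
    (by exact_mod_cast h14) (by exact_mod_cast h23) (by exact_mod_cast h24)
    (by exact_mod_cast h34)
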